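/- Let a ∈ ℍⁿ be an arbitrary quaternion vector (regarded as a row vector) and let v ∈ ℝⁿ be a real vector with ‖v‖ = 1. Then there exist a quaternion vector u ∈ ℍⁿ with ‖u‖ = √2 and a quaternion scalar z with |z| = 1 such that for every index j we have (aⱼ − (∑ᵢ aᵢ * uᵢ) * (star uⱼ)) * z = ‖a‖ * vⱼ; that is, the right Householder matrix G = (I − u ūᵀ) z satisfies aᵀ G = ‖a‖ vᵀ. -/

import Mathlib

open Finset

private lemma quat_normSq_one_of_norm_one {z : Quaternion ℝ} (hz : ‖z‖ = 1) :
    Quaternion.normSq z = 1 := by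
  rw [Quaternion.normSq_eq_norm_mul_self, hz, one_mul]

private lemma quat_re_sum {ι : Type*} (s : Finset ι) (f : ι → Quaternion ℝ) :
    (∑ i ∈ s, f i).re = ∑ i ∈ s, (f i).re :=
  map_sum (AddMonoidHom.mk' QuaternionAlgebra.re fun _ _ => rfl) f s

private lemma quat_coe_sum {ι : Type*} (s : Finset ι) (f : ι → ℝ) :
    ((∑ i ∈ s, f i : ℝ) : Quaternion ℝ) = ∑ i ∈ s, ((f i : ℝ) : Quaternion ℝ) :=
  map_sum (AddMonoidHom.mk' (fun r : ℝ => (r : Quaternion ℝ)) Quaternion.coe_add) f s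

/-- **Right quaternion Householder transformation** (Theorem 2 of the paper).
Given an arbitrary quaternion row vector `a` and a real unit vector `v`, there exist a
quaternion vector `u` of norm `√2` and a unit quaternion scalar `z` such that the
right Householder matrix `G = (I - u ūᵀ) z` satisfies `aᵀ G = ‖a‖ vᵀ`. -/
theorem right_quaternion_householder (n : ℕ) (a : Fin n → Quaternion ℝ) (v : Fin n → ℝ)
    (hv : Real.sqrt (∑ i, (v i) ^ 2) = 1) :
    ∃ (u : Fin n → Quaternion ℝ) (z : Quaternion ℝ),
      Real.sqrt (∑ i, ‖u i‖ ^ 2) = Real.sqrt 2 ∧ ‖z‖ = 1 ∧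
      ∀ j, (a j - (∑ i, a i * u i) * star (u j)) * z =
        ((Real.sqrt (∑ k, ‖a k‖ ^ 2) : ℝ) : Quaternion ℝ) * ((v j : ℝ) : Quaternion ℝ) := by
  have hv0 : 0 ≤ ∑ i, (v i) ^ 2 := Finset.sum_nonneg fun i _ => sq_nonneg _
  have hv2 : (∑ i, (v i) ^ 2) = 1 := by
    have := Real.sq_sqrt hv0
    rw [hv] at this; simpa using this.symm
  set α := Real.sqrt (∑ k, ‖a k‖ ^ 2) with hαdef
  clear_value α
  have hA0 : 0 ≤ ∑ k, ‖a k‖ ^ 2 := Finset.sum_nonneg fun i _ => sq_nonneg _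
  have hα2 : α ^ 2 = ∑ k, ‖a k‖ ^ 2 := by rw [hαdef]; exact Real.sq_sqrt hA0
  by_cases ha : a = 0
  · -- degenerate case `a = 0`
    have hα0 : α = 0 := by simp [hαdef, ha]
    have hn : 0 < n := by
      rcases Nat.eq_zero_or_pos n with h | h
      · subst h; simp [Finset.univ_eq_empty] at hv
      · exact h
    refine ⟨fun j => if j = ⟨0, hn⟩ then ((Real.sqrt 2 : ℝ) : Quaternion ℝ) else 0, 1,
      ?_, norm_one, ?_⟩
    · have h1 : ∀ j : Fin n,
          ‖(if j = ⟨0, hn⟩ then ((Real.sqrt 2 : ℝ) : Quaternion ℝ) else 0)‖ ^ 2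
          = if j = ⟨0, hn⟩ then (2 : ℝ) else 0 := by
        intro j
        by_cases h : j = ⟨0, hn⟩ <;>
          simp [h, Quaternion.norm_coe, Real.norm_eq_abs, sq_abs,
            Real.sq_sqrt (by norm_num : (0:ℝ) ≤ 2)]
      congr 1
      rw [Finset.sum_congr rfl fun j _ => h1 j, Finset.sum_ite_eq']
      simp
    · intro j; simp [ha, hα0]
  · -- main case `a ≠ 0`
    have hαpos : 0 < α := by
      have hne : ∑ k, ‖a k‖ ^ 2 ≠ 0 := by
        intro h
        apply ha; funext k
        have := (Finset.sum_eq_zero_iff_of_nonneg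
          (fun i _ => sq_nonneg ‖a i‖)).1 h k (Finset.mem_univ k)
        simpa using this
      rw [hαdef]; exact Real.sqrt_pos.2 (lt_of_le_of_ne hA0 (Ne.symm hne))
    set c := ∑ i, a i * ((v i : ℝ) : Quaternion ℝ) with hc
    clear_value c
    obtain ⟨z, hz1, hcz⟩ :
        ∃ z : Quaternion ℝ, ‖z‖ = 1 ∧ c * z = ((-‖c‖ : ℝ) : Quaternion ℝ) := by
      by_cases h0 : c = 0
      · exact ⟨1, norm_one, by simp [h0]⟩
      · have hcn : ‖c‖ ≠ 0 := norm_ne_zero_iff.2 h0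
        refine ⟨-(star c) * ((‖c‖⁻¹ : ℝ) : Quaternion ℝ), ?_, ?_⟩
        · rw [norm_mul, norm_neg, Quaternion.norm_star, Quaternion.norm_coe,
            Real.norm_eq_abs, abs_of_nonneg (inv_nonneg.2 (norm_nonneg c))]
          field_simp
        · have h1 : c * (-(star c) * ((‖c‖⁻¹ : ℝ) : Quaternion ℝ))
              = -((c * star c) * ((‖c‖⁻¹ : ℝ) : Quaternion ℝ)) := by
            rw [neg_mul, mul_neg, ← mul_assoc]
          rw [h1, Quaternion.self_mul_star, Quaternion.normSq_eq_norm_mul_self,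
            ← Quaternion.coe_mul, ← Quaternion.coe_neg]
          congr 1
          field_simp
    set ρ := Real.sqrt (α ^ 2 + α * ‖c‖) with hρdef
    clear_value ρ
    have hρarg : 0 < α ^ 2 + α * ‖c‖ := by positivity
    have hρpos : 0 < ρ := by rw [hρdef]; exact Real.sqrt_pos.2 hρarg
    have hρ2 : ρ ^ 2 = α ^ 2 + α * ‖c‖ := by rw [hρdef]; exact Real.sq_sqrt hρarg.le
    set y : Fin n → Quaternion ℝ :=
      fun j => ((α * v j : ℝ) : Quaternion ℝ) * star z with hy
    clear_value y
    -- key sum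
    have key : ∑ j, a j * star (y j) = ((-(α * ‖c‖) : ℝ) : Quaternion ℝ) := by
      have h1 : ∀ j, a j * star (y j)
          = ((α : ℝ) : Quaternion ℝ) * (a j * ((v j : ℝ) : Quaternion ℝ)) * z := by
        intro j
        simp only [hy, star_mul, Quaternion.star_smul, Quaternion.star_coe, star_star,
          Quaternion.coe_mul_eq_smul, Quaternion.mul_coe_eq_smul, smul_mul_assoc,
          mul_smul_comm, smul_smul]
        ring_nf
      rw [Finset.sum_congr rfl (fun j _ => h1 j), ← Finset.sum_mul, ← Finset.mul_sum,
        ← hc, mul_assoc, hcz, ← Quaternion.coe_mul]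
      congr 1; ring
    have keyre : (∑ j, a j * star (y j)).re = -(α * ‖c‖) := by
      rw [key]; simp
    -- sum of squared norms of `a - y`
    have hnormsum : ∑ j, ‖a j - y j‖ ^ 2 = 2 * ρ ^ 2 := by
      have h1 : ∀ j, ‖a j - y j‖ ^ 2
          = ‖a j‖ ^ 2 + (α * v j) ^ 2 - 2 * (a j * star (y j)).re := by
        intro j
        have hh := Quaternion.normSq_add (a j) (-(y j))
        rw [← sub_eq_add_neg] at hh
        have hy2 : Quaternion.normSq (y j) = (α * v j) ^ 2 := by
          simp only [hy]
          rw [map_mul, Quaternion.normSq_coe, Quaternion.normSq_star,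
            quat_normSq_one_of_norm_one hz1, mul_one]
        rw [sq, ← Quaternion.normSq_eq_norm_mul_self, hh, Quaternion.normSq_neg,
          star_neg, mul_neg, Quaternion.re_neg, hy2,
          Quaternion.normSq_eq_norm_mul_self, ← sq]
        ring
      rw [Finset.sum_congr rfl (fun j _ => h1 j), Finset.sum_sub_distrib,
        Finset.sum_add_distrib, ← Finset.mul_sum, ← quat_re_sum, keyre]
      have hvsum : ∑ j, (α * v j) ^ 2 = α ^ 2 := by
        have h2 : ∀ j : Fin n, (α * v j) ^ 2 = α ^ 2 * (v j) ^ 2 := fun j => by ring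
        rw [Finset.sum_congr rfl fun j _ => h2 j, ← Finset.mul_sum, hv2, mul_one]
      rw [hvsum, ← hα2, hρ2]
      ring
    refine ⟨fun j => star (a j - y j) * ((ρ⁻¹ : ℝ) : Quaternion ℝ), z, ?_, hz1, ?_⟩
    · -- norm of u is √2
      have h1 : ∀ j, ‖star (a j - y j) * ((ρ⁻¹ : ℝ) : Quaternion ℝ)‖ ^ 2
          = ‖a j - y j‖ ^ 2 * (ρ⁻¹) ^ 2 := by
        intro j
        rw [norm_mul, Quaternion.norm_star, Quaternion.norm_coe, Real.norm_eq_abs,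
          abs_of_nonneg (inv_nonneg.2 hρpos.le), mul_pow]
      rw [Finset.sum_congr rfl fun j _ => h1 j, ← Finset.sum_mul, hnormsum]
      congr 1
      field_simp
    · -- the Householder identity
      have hsum : (∑ i, a i * (star (a i - y i) * ((ρ⁻¹ : ℝ) : Quaternion ℝ)))
          = ((ρ : ℝ) : Quaternion ℝ) := by
        have h1 : ∀ i, a i * (star (a i - y i) * ((ρ⁻¹ : ℝ) : Quaternion ℝ))
            = (a i * star (a i) - a i * star (y i)) * ((ρ⁻¹ : ℝ) : Quaternion ℝ) := by
          intro i; rw [← mul_assoc, star_sub, mul_sub]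
        rw [Finset.sum_congr rfl fun i _ => h1 i, ← Finset.sum_mul,
          Finset.sum_sub_distrib, key]
        have h2 : ∑ i, a i * star (a i) = ((α ^ 2 : ℝ) : Quaternion ℝ) := by
          have h3 : ∀ i, a i * star (a i) = ((‖a i‖ ^ 2 : ℝ) : Quaternion ℝ) := by
            intro i
            rw [Quaternion.self_mul_star, Quaternion.normSq_eq_norm_mul_self, sq]
          rw [Finset.sum_congr rfl fun i _ => h3 i, ← quat_coe_sum, ← hα2]
        rw [h2, ← Quaternion.coe_sub, ← Quaternion.coe_mul]
        congr 1
        have h4 : α ^ 2 - -(α * ‖c‖) = ρ ^ 2 := by rw [hρ2]; ring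
        rw [h4, sq]
        field_simp
      intro j
      rw [hsum, star_mul, Quaternion.star_coe, star_star, ← mul_assoc,
        ← Quaternion.coe_mul, mul_inv_cancel₀ hρpos.ne', Quaternion.coe_one, one_mul,
        sub_sub_cancel]
      simp only [hy]
      rw [mul_assoc, Quaternion.star_mul_self, quat_normSq_one_of_norm_one hz1]
      simp [Quaternion.coe_mul]
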